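/- Under the assumptions of the spectral decomposition, the solution of the differential Sylvester equation X'(t) = AX(t) + X(t)B + C with X(0) = D is X(t) = U ((e^{t(α_i+β_j)})_{i,j} ⊙ U⁻¹ D V⁻ᴴ + (φ_t(α_i+β_j))_{i,j} ⊙ U⁻¹ C V⁻ᴴ) Vᴴ, where φ_t(α) = (e^{tα}−1)/α if α ≠ 0 and φ_t(0) = t. -/

import Mathlib

open Matrix

attribute [local instance] Matrix.normedAddCommGroup Matrix.normedSpace

private lemma entrywise_hasDerivAt {n m : ℕ} {Y : ℝ → Matrix (Fin n) (Fin m) ℂ}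
    {Y' : Matrix (Fin n) (Fin m) ℂ} {t : ℝ}
    (h : ∀ i j, HasDerivAt (fun s => Y s i j) (Y' i j) t) : HasDerivAt Y Y' t := by
  have h2 : HasDerivAt (F := Fin n → Fin m → ℂ) (fun s => (Y s : Fin n → Fin m → ℂ))
      (Y' : Fin n → Fin m → ℂ) t :=
    hasDerivAt_pi.2 fun i => hasDerivAt_pi.2 fun j => h i j
  exact h2

private lemma sandwich_hasDerivAt {n m : ℕ} (U : Matrix (Fin n) (Fin n) ℂ)
    (W : Matrix (Fin m) (Fin m) ℂ) {Y : ℝ → Matrix (Fin n) (Fin m) ℂ}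
    {Y' : Matrix (Fin n) (Fin m) ℂ} {t : ℝ}
    (h : ∀ i j, HasDerivAt (fun s => Y s i j) (Y' i j) t) :
    HasDerivAt (fun s => U * Y s * W) (U * Y' * W) t := by
  apply entrywise_hasDerivAt
  intro i j
  have hrw : ∀ M : Matrix (Fin n) (Fin m) ℂ,
      (U * M * W) i j = ∑ l, (∑ k, U i k * M k l) * W l j := by
    intro M; simp [Matrix.mul_apply]
  simp only [hrw]
  exact HasDerivAt.fun_sum fun l _ =>
    (HasDerivAt.fun_sum fun k _ => (h k l).const_mul (U i k)).mul_const (W l j)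

theorem stmt13 {n m : ℕ} (A U : Matrix (Fin n) (Fin n) ℂ) (B V : Matrix (Fin m) (Fin m) ℂ)
    (C D : Matrix (Fin n) (Fin m) ℂ)
    (α : Fin n → ℂ) (β : Fin m → ℂ)
    (hU : IsUnit U.det) (hV : IsUnit V.det)
    (hA : A = U * Matrix.diagonal α * U⁻¹)
    (hB : Bᴴ = V * Matrix.diagonal (fun j => starRingEnd ℂ (β j)) * V⁻¹) :
    let φ : ℝ → ℂ → ℂ := fun t γ =>
      if γ ≠ 0 then (Complex.exp ((t : ℂ) * γ) - 1) / γ else (t : ℂ)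
    let X : ℝ → Matrix (Fin n) (Fin m) ℂ := fun t =>
      U * ((Matrix.of fun i j => Complex.exp ((t : ℂ) * (α i + β j)))
            ⊙ (U⁻¹ * D * (V⁻¹)ᴴ)
          + (Matrix.of fun i j => φ t (α i + β j)) ⊙ (U⁻¹ * C * (V⁻¹)ᴴ)) * Vᴴ
    X 0 = D ∧ ∀ t : ℝ, HasDerivAt X (A * X t + X t * B + C) t := by
  intro φ X
  set E := U⁻¹ * D * (V⁻¹)ᴴ with hE
  set F := U⁻¹ * C * (V⁻¹)ᴴ with hF
  have hUU : U * U⁻¹ = 1 := Matrix.mul_nonsing_inv U hU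
  have hUU' : U⁻¹ * U = 1 := Matrix.nonsing_inv_mul U hU
  have hVV : Vᴴ * (V⁻¹)ᴴ = 1 := by
    rw [← Matrix.conjTranspose_mul, Matrix.nonsing_inv_mul V hV, Matrix.conjTranspose_one]
  have hVV' : (V⁻¹)ᴴ * Vᴴ = 1 := by
    rw [← Matrix.conjTranspose_mul, Matrix.mul_nonsing_inv V hV, Matrix.conjTranspose_one]
  have sandwich : ∀ M : Matrix (Fin n) (Fin m) ℂ, U * (U⁻¹ * M * (V⁻¹)ᴴ) * Vᴴ = M := by
    intro M
    simp only [← Matrix.mul_assoc]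
    rw [hUU, Matrix.one_mul, Matrix.mul_assoc, hVV', Matrix.mul_one]
  have hBform : B = (V⁻¹)ᴴ * (Matrix.diagonal β * Vᴴ) := by
    have h := congrArg Matrix.conjTranspose hB
    rw [Matrix.conjTranspose_conjTranspose] at h
    have hd : (Matrix.diagonal fun j => starRingEnd ℂ (β j))ᴴ = Matrix.diagonal β := by
      ext i j
      by_cases hij : i = j
      · subst hij; simp [Matrix.conjTranspose_apply, Matrix.diagonal_apply_eq]
      · simp [Matrix.conjTranspose_apply, Matrix.diagonal_apply_ne _ hij,
          Matrix.diagonal_apply_ne' _ hij]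
    rw [h, Matrix.conjTranspose_mul, Matrix.conjTranspose_mul, hd]
  -- key scalar derivatives
  have key : ∀ (t : ℝ) (γ : ℂ), HasDerivAt (fun s : ℝ => Complex.exp ((s : ℂ) * γ))
      (γ * Complex.exp ((t : ℂ) * γ)) t := by
    intro t γ
    have h1 : HasDerivAt (fun z : ℂ => Complex.exp (z * γ))
        (Complex.exp ((t : ℂ) * γ) * (1 * γ)) (t : ℂ) :=
      ((hasDerivAt_id ((t : ℝ) : ℂ)).mul_const γ).cexp
    have h2 := h1.comp_ofReal
    simpa [mul_comm] using h2
  have keyφ : ∀ (t : ℝ) (γ : ℂ), HasDerivAt (fun s : ℝ => φ s γ)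
      (Complex.exp ((t : ℂ) * γ)) t := by
    intro t γ
    by_cases hγ : γ = 0
    · have : (fun s : ℝ => φ s γ) = fun s : ℝ => (s : ℂ) := by
        funext s; simp [φ, hγ]
      rw [this, hγ]
      simpa using (hasDerivAt_id t).ofReal_comp
    · have : (fun s : ℝ => φ s γ) = fun s : ℝ => (Complex.exp ((s : ℂ) * γ) - 1) / γ := by
        funext s; simp [φ, hγ]
      rw [this]
      have h := ((key t γ).sub_const 1).div_const γ
      have : γ * Complex.exp ((t : ℂ) * γ) / γ = Complex.exp ((t : ℂ) * γ) := by
        field_simp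
      rwa [this] at h
  have hφ : ∀ (t : ℝ) (γ : ℂ), γ * φ t γ + 1 = Complex.exp ((t : ℂ) * γ) := by
    intro t γ
    by_cases hγ : γ = 0
    · simp [φ, hγ]
    · simp only [φ, ne_eq, hγ, not_false_eq_true, if_true]
      field_simp
      ring
  constructor
  · show U * ((Matrix.of fun i j => Complex.exp (((0 : ℝ) : ℂ) * (α i + β j))) ⊙ E
        + (Matrix.of fun i j => φ 0 (α i + β j)) ⊙ F) * Vᴴ = D
    have h1 : (Matrix.of fun i j => Complex.exp (((0 : ℝ) : ℂ) * (α i + β j))) ⊙ E = E := by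
      ext i j; simp [Matrix.hadamard_apply]
    have h2 : (Matrix.of fun i j => φ 0 (α i + β j)) ⊙ F = (0 : Matrix (Fin n) (Fin m) ℂ) := by
      ext i j
      simp only [Matrix.hadamard_apply, Matrix.of_apply, Matrix.zero_apply, φ]
      split_ifs <;> simp
    rw [h1, h2, add_zero, hE, sandwich]
  · intro t
    set Y' : Matrix (Fin n) (Fin m) ℂ := Matrix.of fun i j =>
      (α i + β j) * Complex.exp ((t : ℂ) * (α i + β j)) * E i j
        + Complex.exp ((t : ℂ) * (α i + β j)) * F i j with hY'
    have hder : HasDerivAt X (U * Y' * Vᴴ) t := by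
      apply sandwich_hasDerivAt
      intro i j
      simp only [Matrix.add_apply, Matrix.hadamard_apply, Matrix.of_apply, hY']
      exact ((key t (α i + β j)).mul_const (E i j)).add
        ((keyφ t (α i + β j)).mul_const (F i j))
    have heq : U * Y' * Vᴴ = A * X t + X t * B + C := by
      set Yt : Matrix (Fin n) (Fin m) ℂ :=
        (Matrix.of fun i j => Complex.exp ((t : ℂ) * (α i + β j))) ⊙ E
          + (Matrix.of fun i j => φ t (α i + β j)) ⊙ F with hYt
      have hX : X t = U * Yt * Vᴴ := rfl
      have hAX : A * X t = U * (Matrix.diagonal α * Yt) * Vᴴ := by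
        rw [hX, hA]
        simp only [← Matrix.mul_assoc]
        rw [Matrix.mul_assoc (U * Matrix.diagonal α) U⁻¹ U, hUU', Matrix.mul_one]
      have hXB : X t * B = U * (Yt * Matrix.diagonal β) * Vᴴ := by
        rw [hX, hBform]
        simp only [← Matrix.mul_assoc]
        rw [Matrix.mul_assoc (U * Yt) Vᴴ (V⁻¹)ᴴ, hVV, Matrix.mul_one]
      have hC : C = U * F * Vᴴ := (sandwich C).symm
      rw [hAX, hXB, hC, ← Matrix.add_mul, ← Matrix.add_mul, ← Matrix.mul_add, ← Matrix.mul_add]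
      congr 2
      ext i j
      simp only [hY', hYt, Matrix.add_apply, Matrix.hadamard_apply, Matrix.of_apply,
        Matrix.diagonal_mul, Matrix.mul_diagonal]
      linear_combination (-(F i j)) * (hφ t (α i + β j))
    rw [← heq]
    exact hder
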